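/- Let X be a topological space, p ∈ X, and let κ be an infinite regular cardinal. If there is an escape sequence at p of length κ all of whose terms are regular open sets, then X has a cellular family of cardinality κ. -/

import Mathlib

universe u v w

/-- `U` is an escape sequence at `p`: a decreasing (w.r.t. the index order) sequence
of neighborhoods of `p` whose intersection is not a neighborhood of `p`. -/
def IsEscapeSeq {X : Type w} [TopologicalSpace X] (p : X) {ι : Type u} [Preorder ι]
    (U : ι → Set X) : Prop :=
  (∀ i, U i ∈ nhds p) ∧ (∀ i j : ι, i ≤ j → U j ⊆ U i) ∧ (⋂ i, U i) ∉ nhds p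

/-- If `p` has a regular-open escape sequence of length an infinite
regular cardinal `κ`, then `X` has a cellular family (pairwise disjoint family of
nonempty open sets) of cardinality `κ`. -/
theorem escape_seq_regular_open_cellular {X : Type u} [TopologicalSpace X] (p : X)
    (κ : Cardinal.{u}) (hκ : κ.IsRegular) (U : κ.ord.ToType → Set X)
    (hesc : IsEscapeSeq p U)
    (hro : ∀ i, U i = interior (closure (U i))) :
    ∃ C : Set (Set X), Cardinal.mk C = κ ∧
      (∀ V ∈ C, IsOpen V ∧ V.Nonempty) ∧
      (∀ V ∈ C, ∀ W ∈ C, V ≠ W → Disjoint V W) := by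
  obtain ⟨hnhds, hmono, hint⟩ := hesc
  have wf : WellFounded ((· < ·) : κ.ord.ToType → κ.ord.ToType → Prop) := wellFounded_lt
  -- each U i is open
  have hopen : ∀ i : κ.ord.ToType, IsOpen (U i) := fun i => by
    rw [hro i]; exact isOpen_interior
  -- for every i there is j with U j ⊊ U i
  have hex : ∀ i : κ.ord.ToType, ∃ j, U j ⊂ U i := by
    intro i
    by_contra h
    push_neg at h
    apply hint
    have heq : (⋂ j, U j) = U i := by
      refine subset_antisymm (Set.iInter_subset U i) (Set.subset_iInter fun j => ?_)
      rcases le_total i j with hij | hij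
      · rcases (hmono i j hij).ssubset_or_eq with hs | hs
        · exact absurd hs (h j)
        · exact hs.symm.subset
      · exact hmono j i hij
    rw [heq]
    exact hnhds i
  -- f i : least index whose value is strictly below U i
  set f : κ.ord.ToType → κ.ord.ToType := fun i => wf.min {j | U j ⊂ U i} (hex i) with hf
  have hfmem : ∀ i, U (f i) ⊂ U i := fun i => wf.min_mem _ (hex i)
  have hfmin : ∀ i j, U j ⊂ U i → f i ≤ j := fun i j hj =>
    not_lt.1 (wf.not_lt_min _ hj)
  -- r i : least index with the same value as U i
  set r : κ.ord.ToType → κ.ord.ToType := fun i => wf.min {j | U j = U i} ⟨i, rfl⟩ with hr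
  have hrmem : ∀ i, U (r i) = U i := fun i => wf.min_mem {j | U j = U i} ⟨i, rfl⟩
  have hrmin : ∀ i j, U j = U i → r i ≤ j := fun i j hj =>
    not_lt.1 (wf.not_lt_min {j | U j = U i} hj)
  have hfr : ∀ i, f (r i) = f i := by
    intro i
    apply le_antisymm
    · exact hfmin _ _ (by rw [hrmem i]; exact hfmem i)
    · exact hfmin _ _ (by rw [← hrmem i]; exact hfmem (r i))
  -- the annuli
  set A : κ.ord.ToType → Set X := fun i => U i \ closure (U (f i)) with hA
  have hAopen : ∀ i, IsOpen (A i) := fun i => (hopen i).sdiff isClosed_closure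
  have hAne : ∀ i, (A i).Nonempty := by
    intro i
    rw [Set.diff_nonempty]
    intro hsub
    have : U i ⊆ U (f i) := by
      calc U i = interior (U i) := ((hopen i).interior_eq).symm
        _ ⊆ interior (closure (U (f i))) := interior_mono hsub
        _ = U (f i) := (hro (f i)).symm
    exact (hfmem i).not_subset this
  -- disjointness
  have hkey : ∀ a b : κ.ord.ToType, a < b → U a ≠ U b → Disjoint (A a) (A b) := by
    intro a b hab hne
    have hss : U b ⊂ U a := (hmono a b hab.le).ssubset_of_ne hne.symm
    have hfa : f a ≤ b := hfmin a b hss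
    have hsub : A b ⊆ closure (U (f a)) := fun x hx =>
      subset_closure (hmono (f a) b hfa hx.1)
    rw [Set.disjoint_left]
    exact fun x hxa hxb => hxa.2 (hsub hxb)
  have hdisj : ∀ a b : κ.ord.ToType, U a ≠ U b → Disjoint (A a) (A b) := by
    intro a b hne
    rcases lt_trichotomy a b with h | h | h
    · exact hkey a b h hne
    · exact absurd (congrArg U h) hne
    · exact (hkey b a h (Ne.symm hne)).symm
  -- values of r with distinct U-values
  have hTval : ∀ x y : κ.ord.ToType, U (r x) = U (r y) → r x = r y := by
    intro x y h
    have hxy : U x = U y := by rw [← hrmem x, ← hrmem y, h]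
    apply le_antisymm
    · exact hrmin x (r y) (by rw [hrmem y, hxy])
    · exact hrmin y (r x) (by rw [hrmem x, hxy])
  set T : Set κ.ord.ToType := Set.range r with hT
  -- A is injective on T
  have hinj : Set.InjOn A T := by
    rintro i ⟨x, rfl⟩ j ⟨y, rfl⟩ hAeq
    by_contra hne
    have hUne : U (r x) ≠ U (r y) := fun h => hne (hTval x y h)
    have := hdisj _ _ hUne
    rw [hAeq, disjoint_self] at this
    exact (hAne (r y)).ne_empty this
  refine ⟨A '' T, ?_, ?_, ?_⟩
  · rw [Cardinal.mk_image_eq_of_injOn A T hinj]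
    apply le_antisymm
    · calc Cardinal.mk T ≤ Cardinal.mk κ.ord.ToType := Cardinal.mk_set_le T
        _ = κ := by rw [Cardinal.mk_toType, Cardinal.card_ord]
    · by_contra hlt
      push_neg at hlt
      have hScard : Cardinal.mk (f '' T : Set κ.ord.ToType) < κ :=
        lt_of_le_of_lt (Cardinal.mk_image_le) hlt
      have hbd : Set.Bounded ((· < ·) : κ.ord.ToType → κ.ord.ToType → Prop) (f '' T) :=
        not_isCofinal_iff.1 (fun hc => (Order.cof_le hc).not_gt
          (by rwa [Ordinal.cof_toType, hκ.cof_ord]))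
      obtain ⟨i0, hi0⟩ := hbd
      have hfi0 : f i0 < i0 := by
        have : f i0 ∈ f '' T := ⟨r i0, ⟨i0, rfl⟩, hfr i0⟩
        exact hi0 _ this
      exact (hfmem i0).not_subset (hmono (f i0) i0 hfi0.le)
  · rintro V ⟨i, -, rfl⟩
    exact ⟨hAopen i, hAne i⟩
  · rintro V ⟨i, hi, rfl⟩ W ⟨j, hj, rfl⟩ hne
    apply hdisj
    intro hU
    rcases hi with ⟨x, rfl⟩
    rcases hj with ⟨y, rfl⟩
    exact hne (congrArg A (hTval x y hU))
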